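/- Let I1 and I2 be interval-posets of sizes k1 and k2, let t = trees(I2), and let x1 < x2 < ⋯ < xt be the least labels of the connected components of dec(I2), shifted by k1+1. Then 𝔹(I1,I2) has exactly t+1 elements P_0, P_1, …, P_t, where P_i is the partial order on {1,…,k1+k2+1} generated by the relations of I1 on {1,…,k1}, the relations of I2 shifted by k1+1 on {k1+2,…,k1+k2+1}, the increasing relations j ⊴ k1+1 for all j ≤ k1, and the decreasing relations x_j ⊴ k1+1 for all j ≤ i. Moreover, in every element of 𝔹(I1,I2) there is no relation between an element of {1,…,k1} and an element of {k1+2,…,k1+k2+1}. -/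

import Mathlib

/-- An interval-poset: a partial order on `{1, …, n}` in which, whenever
`a ⊴ c` and `a < c`, all `a < b < c` satisfy `b ⊴ c`, and whenever `c ⊴ a` and
`a < c`, all `a < b < c` satisfy `b ⊴ a`.  `rel x y` means "`x` is below `y`". -/
structure IntervalPoset : Type where
  n : ℕ
  rel : ℕ → ℕ → Prop
  supp : ∀ a b, rel a b → 1 ≤ a ∧ a ≤ n ∧ 1 ≤ b ∧ b ≤ n
  refl : ∀ a, 1 ≤ a → a ≤ n → rel a a
  antisymm : ∀ a b, rel a b → rel b a → a = b
  trans : ∀ a b c, rel a b → rel b c → rel a c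
  incCond : ∀ a b c, rel a c → a < b → b < c → rel b c
  decCond : ∀ a b c, rel c a → a < b → b < c → rel b a

/-- The partial order on `{1, …, n}` generated by a family `r` of relations. -/
def genClos (n : ℕ) (r : ℕ → ℕ → Prop) : ℕ → ℕ → Prop :=
  fun a b => (a = b ∧ 1 ≤ a ∧ a ≤ n) ∨ Relation.TransGen r a b

/-- `decBelow I x y` : `x` is below `y` by a decreasing relation of `I`. -/
def decBelow (I : IntervalPoset) (x y : ℕ) : Prop := I.rel x y ∧ y < x

/-- Connectivity in `dec I` (the poset of decreasing relations of `I`). -/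
def decConn (I : IntervalPoset) : ℕ → ℕ → Prop :=
  Relation.ReflTransGen (fun a b => decBelow I a b ∨ decBelow I b a)

/-- `compMin I r` : `r` is the least label of a connected component of `dec I`. -/
def compMin (I : IntervalPoset) (r : ℕ) : Prop :=
  1 ≤ r ∧ r ≤ I.n ∧ ∀ y, decConn I r y → r ≤ y

/-- `trees I` : the number of connected components of `dec I`. -/
noncomputable def trees (I : IntervalPoset) : ℕ := {r | compMin I r}.ncard

/-- The composition `𝔹(I1, I2)` of two interval-posets: all interval-posets
`I` of size `I1.n + I2.n + 1` whose induced subposet on `{1, …, k1}` is `I1`,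
whose induced subposet on `{k1+2, …, k1+k2+1}` is `I2` shifted by `k1+1`, with
`i ⊴ k1+1` for all `i ≤ k1` and `k1+1 ⊴ j` for no `j > k1+1`. -/
def comp (I1 I2 : IntervalPoset) : Set IntervalPoset :=
  {I | I.n = I1.n + I2.n + 1 ∧
    (∀ a b, 1 ≤ a → a ≤ I1.n → 1 ≤ b → b ≤ I1.n → (I.rel a b ↔ I1.rel a b)) ∧
    (∀ a b, 1 ≤ a → a ≤ I2.n → 1 ≤ b → b ≤ I2.n →
      (I.rel (a + I1.n + 1) (b + I1.n + 1) ↔ I2.rel a b)) ∧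
    (∀ i, 1 ≤ i → i ≤ I1.n → I.rel i (I1.n + 1)) ∧
    (∀ j, I1.n + 1 < j → ¬ I.rel (I1.n + 1) j)}

lemma IntervalPoset.ext' (I J : IntervalPoset) (hn : I.n = J.n) (hr : I.rel = J.rel) :
    I = J := by
  cases I; cases J; simp only [mk.injEq] at *; exact ⟨hn, hr⟩

lemma decConn_symm (I : IntervalPoset) {a b : ℕ} (h : decConn I a b) : decConn I b a := by
  have hs : Symmetric (fun a b => decBelow I a b ∨ decBelow I b a) := fun u v h => h.symm
  induction h with
  | refl => exact Relation.ReflTransGen.refl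
  | tail _ hst ih => exact Relation.ReflTransGen.head (hs hst) ih

lemma decConn_trans (I : IntervalPoset) {a b c : ℕ} (h : decConn I a b) (h2 : decConn I b c) :
    decConn I a c := Relation.ReflTransGen.trans h h2

lemma decConn_bounds (I : IntervalPoset) {a b : ℕ} (ha : 1 ≤ a) (han : a ≤ I.n)
    (h : decConn I a b) : 1 ≤ b ∧ b ≤ I.n := by
  induction h with
  | refl => exact ⟨ha, han⟩
  | tail _ hstep ih =>
    rcases hstep with ⟨hr, _⟩ | ⟨hr, _⟩
    · rcases I.supp _ _ hr with ⟨_, _, h1, h2⟩; exact ⟨h1, h2⟩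
    · rcases I.supp _ _ hr with ⟨h1, h2, _, _⟩; exact ⟨h1, h2⟩

/-- for a component min `r`, everything connected to `r` is `⊴ r` and `≥ r`. -/
lemma compMin_rel (I : IntervalPoset) {r : ℕ} (hr : compMin I r) :
    ∀ y, decConn I r y → I.rel y r ∧ r ≤ y := by
  intro y h
  induction h with
  | refl => exact ⟨I.refl r hr.1 hr.2.1, le_refl r⟩
  | @tail z y hrz hstep ih =>
    have hry : r ≤ y := hr.2.2 y (hrz.tail hstep)
    rcases hstep with ⟨hzy, hyz⟩ | ⟨hyzr, hzy⟩
    · -- decBelow z y : I.rel z y ∧ y < z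
      rcases eq_or_lt_of_le hry with h | h
      · constructor
        · rw [← h]; exact I.refl r hr.1 hr.2.1
        · exact hry
      · exact ⟨I.decCond r y z ih.1 h hyz, hry⟩
    · -- decBelow y z : I.rel y z ∧ z < y
      exact ⟨I.trans y z r hyzr ih.1, hry⟩

lemma comp_exists (I : IntervalPoset) {y : ℕ} (h1 : 1 ≤ y) (h2 : y ≤ I.n) :
    ∃ r, compMin I r ∧ I.rel y r ∧ r ≤ y := by
  classical
  set S : Set ℕ := {z | decConn I y z} with hS
  have hyS : y ∈ S := Relation.ReflTransGen.refl
  have hne : S.Nonempty := ⟨y, hyS⟩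
  set r := sInf S with hrdef
  have hrS : r ∈ S := Nat.sInf_mem hne
  have hrb := decConn_bounds I h1 h2 hrS
  have hcm : compMin I r := by
    refine ⟨hrb.1, hrb.2, fun z hz => ?_⟩
    exact Nat.sInf_le (decConn_trans I hrS hz)
  have := compMin_rel I hcm y (decConn_symm I hrS)
  exact ⟨r, hcm, this⟩

lemma compMin_unique (I : IntervalPoset) {r r' : ℕ} (h : compMin I r) (h' : compMin I r')
    (hc : decConn I r r') : r = r' :=
  le_antisymm (h.2.2 r' hc) (h'.2.2 r (decConn_symm I hc))

/-- interval property under a component-style relation -/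
lemma rel_interval (I : IntervalPoset) {r y z : ℕ} (hr : I.rel y r) (hry : r ≤ y)
    (h1 : r ≤ z) (h2 : z ≤ y) : I.rel z r := by
  rcases eq_or_lt_of_le h1 with h | h
  · rw [← h]
    rcases I.supp _ _ hr with ⟨_, _, hb1, hb2⟩
    exact I.refl r hb1 hb2
  · rcases eq_or_lt_of_le h2 with h' | h'
    · rw [h']; exact hr
    · exact I.decCond r z y hr h h'

/-- comparison of component minima along a relation. -/
lemma compMin_le (I : IntervalPoset) {r r' b : ℕ} (hr : compMin I r) (hrel : I.rel b r)
    (hrb : r ≤ b) (hr' : compMin I r') (hrel' : I.rel b r') : r ≤ r' := by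
  rcases le_or_gt r' b with h | h
  · -- r' ≤ b : b connected to both r and r'
    have c1 : decConn I b r := by
      rcases eq_or_lt_of_le hrb with he | hl
      · exact he ▸ Relation.ReflTransGen.refl
      · exact Relation.ReflTransGen.single (Or.inl ⟨hrel, hl⟩)
    have c2 : decConn I b r' := by
      rcases eq_or_lt_of_le h with he | hl
      · exact he ▸ Relation.ReflTransGen.refl
      · exact Relation.ReflTransGen.single (Or.inl ⟨hrel', hl⟩)
    exact hr.2.2 r' (decConn_trans I (decConn_symm I c1) c2)
  · exact le_of_lt (lt_of_le_of_lt hrb h)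

def J2 (I1 I2 : IntervalPoset) (a b : ℕ) : Prop :=
  ∃ a' b', I2.rel a' b' ∧ a = a' + I1.n + 1 ∧ b = b' + I1.n + 1

lemma J2_bounds {I1 I2 : IntervalPoset} {a b : ℕ} (h : J2 I1 I2 a b) :
    I1.n + 2 ≤ a ∧ a ≤ I1.n + I2.n + 1 ∧ I1.n + 2 ≤ b ∧ b ≤ I1.n + I2.n + 1 := by
  obtain ⟨a', b', hr, ha, hb⟩ := h
  have := I2.supp _ _ hr
  omega

lemma J2_trans {I1 I2 : IntervalPoset} {a b c : ℕ} (h1 : J2 I1 I2 a b) (h2 : J2 I1 I2 b c) :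
    J2 I1 I2 a c := by
  obtain ⟨a', b', hr, ha, hb⟩ := h1
  obtain ⟨b'', c', hr', hb', hc⟩ := h2
  have : b' = b'' := by omega
  exact ⟨a', c', I2.trans _ _ _ hr (this ▸ hr'), ha, hc⟩

def Prel (I1 I2 : IntervalPoset) (x : ℕ → ℕ) (i : ℕ) (a b : ℕ) : Prop :=
  (a = b ∧ 1 ≤ a ∧ a ≤ I1.n + I2.n + 1) ∨ I1.rel a b ∨ J2 I1 I2 a b ∨
  (b = I1.n + 1 ∧ 1 ≤ a ∧ a ≤ I1.n) ∨
  (b = I1.n + 1 ∧ ∃ j, 1 ≤ j ∧ j ≤ i ∧ J2 I1 I2 a (x j))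

/-- key lemma for the decreasing condition at `I1.n + 1`. -/
lemma key_dec (I1 I2 : IntervalPoset) (t : ℕ) (x : ℕ → ℕ)
    (hmono : ∀ i j, 1 ≤ i → i < j → j ≤ t → x i < x j)
    (hx : ∀ r, compMin I2 r → ∃ j, 1 ≤ j ∧ j ≤ t ∧ x j = r + I1.n + 1)
    (hx' : ∀ j, 1 ≤ j → j ≤ t → ∃ r, compMin I2 r ∧ x j = r + I1.n + 1)
    {i j b c : ℕ} (hit : i ≤ t) (hj1 : 1 ≤ j) (hji : j ≤ i)
    (hJ : J2 I1 I2 c (x j)) (hb : I1.n + 1 < b) (hbc : b < c) :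
    ∃ j', 1 ≤ j' ∧ j' ≤ i ∧ J2 I1 I2 b (x j') := by
  obtain ⟨r', hcm', hxj⟩ := hx' j hj1 (le_trans hji hit)
  obtain ⟨c0, r0, hrel, hc, hxj0⟩ := hJ
  have hr0 : r0 = r' := by omega
  rw [hr0] at hrel
  have hc0 : 1 ≤ c0 ∧ c0 ≤ I2.n := by
    have := I2.supp _ _ hrel; exact ⟨this.1, this.2.1⟩
  -- b = b0 + I1.n + 1
  obtain ⟨b0, hb0⟩ : ∃ b0, b = b0 + I1.n + 1 := ⟨b - I1.n - 1, by omega⟩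
  have hb0b : 1 ≤ b0 ∧ b0 ≤ I2.n := by omega
  obtain ⟨r'', hcm'', hrel'', hle''⟩ := comp_exists I2 hb0b.1 hb0b.2
  have hb0c0 : b0 < c0 := by omega
  have hrr : r'' ≤ r' := by
    rcases le_or_gt r' b0 with h | h
    · have hb0r' : I2.rel b0 r' :=
        rel_interval I2 hrel (by omega) h (le_of_lt hb0c0)
      exact compMin_le I2 hcm'' hrel'' hle'' hcm' hb0r'
    · omega
  obtain ⟨j'', hj''1, hj''t, hxj''⟩ := hx r'' hcm''
  have hj''j : j'' ≤ j := by
    by_contra hcon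
    push_neg at hcon
    have := hmono j j'' hj1 hcon hj''t
    omega
  exact ⟨j'', hj''1, le_trans hj''j hji, ⟨b0, r'', hrel'', hb0, hxj''⟩⟩

lemma J2_not_m {I1 I2 : IntervalPoset} {c : ℕ} (h : J2 I1 I2 (I1.n + 1) c) : False := by
  have := J2_bounds h; omega

lemma I1_not_m {I1 : IntervalPoset} {c : ℕ}
    (h : I1.rel (I1.n + 1) c) : False := by
  have := I1.supp _ _ h; omega

/-- any non-reflexive relation out of `I1.n+1` is impossible -/
lemma Prel_from_m {I1 I2 : IntervalPoset} {x : ℕ → ℕ} {i c : ℕ}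
    (h : Prel I1 I2 x i (I1.n + 1) c) : c = I1.n + 1 := by
  rcases h with ⟨h, _⟩ | h | h | ⟨h, h2⟩ | ⟨h, _⟩
  · omega
  · exact absurd h I1_not_m
  · exact absurd h J2_not_m
  · omega
  · omega

lemma Prel_supp (I1 I2 : IntervalPoset) (x : ℕ → ℕ) (i : ℕ) :
    ∀ a b, Prel I1 I2 x i a b →
      1 ≤ a ∧ a ≤ I1.n + I2.n + 1 ∧ 1 ≤ b ∧ b ≤ I1.n + I2.n + 1 := by
  intro a b h
  rcases h with ⟨rfl, h⟩ | h | h | ⟨rfl, h⟩ | ⟨rfl, j, hj1, hji, h⟩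
  · omega
  · have := I1.supp _ _ h; omega
  · have := J2_bounds h; omega
  · omega
  · have := J2_bounds h; omega

lemma Prel_refl (I1 I2 : IntervalPoset) (x : ℕ → ℕ) (i : ℕ) :
    ∀ a, 1 ≤ a → a ≤ I1.n + I2.n + 1 → Prel I1 I2 x i a a := by
  intro a h1 h2; exact Or.inl ⟨rfl, h1, h2⟩

lemma Prel_trans (I1 I2 : IntervalPoset) (x : ℕ → ℕ) (i : ℕ) :
    ∀ a b c, Prel I1 I2 x i a b → Prel I1 I2 x i b c → Prel I1 I2 x i a c := by
  intro a b c h1 h2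
  rcases h1 with ⟨rfl, h⟩ | h1
  · exact h2
  rcases h2 with ⟨rfl, h'⟩ | h2
  · exact Or.inr h1
  rcases h1 with h1 | h1 | ⟨rfl, ha1, ha2⟩ | ⟨rfl, j, hj1, hji, hJ⟩
  · -- I1.rel a b
    have hb := I1.supp _ _ h1
    rcases h2 with h2 | h2 | ⟨rfl, hb1, hb2⟩ | ⟨rfl, j, hj1, hji, hJ⟩
    · exact Or.inr (Or.inl (I1.trans _ _ _ h1 h2))
    · have := J2_bounds h2; omega
    · exact Or.inr (Or.inr (Or.inr (Or.inl ⟨rfl, hb.1, hb.2.1⟩)))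
    · have := J2_bounds hJ; omega
  · -- J2 a b
    have hb := J2_bounds h1
    rcases h2 with h2 | h2 | ⟨rfl, hb1, hb2⟩ | ⟨rfl, j, hj1, hji, hJ⟩
    · have := I1.supp _ _ h2; omega
    · exact Or.inr (Or.inr (Or.inl (J2_trans h1 h2)))
    · omega
    · exact Or.inr (Or.inr (Or.inr (Or.inr ⟨rfl, j, hj1, hji, J2_trans h1 hJ⟩)))
  · -- b = I1.n + 1, a ≤ I1.n
    have := Prel_from_m (Or.inr h2)
    subst this
    exact Or.inr (Or.inr (Or.inr (Or.inl ⟨rfl, ha1, ha2⟩)))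
  · -- b = I1.n + 1, decreasing
    have := Prel_from_m (Or.inr h2)
    subst this
    exact Or.inr (Or.inr (Or.inr (Or.inr ⟨rfl, j, hj1, hji, hJ⟩)))

lemma Prel_antisymm (I1 I2 : IntervalPoset) (x : ℕ → ℕ) (i : ℕ) :
    ∀ a b, Prel I1 I2 x i a b → Prel I1 I2 x i b a → a = b := by
  intro a b h1 h2
  rcases h1 with ⟨rfl, h⟩ | h1
  · rfl
  rcases h2 with ⟨rfl, h'⟩ | h2
  · rfl
  rcases h1 with h1 | h1 | ⟨rfl, ha1, ha2⟩ | ⟨rfl, j, hj1, hji, hJ⟩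
  · have hb := I1.supp _ _ h1
    rcases h2 with h2 | h2 | ⟨rfl, hb1, hb2⟩ | ⟨rfl, j, hj1, hji, hJ⟩
    · exact I1.antisymm _ _ h1 h2
    · have := J2_bounds h2; omega
    · omega
    · omega
  · have hb := J2_bounds h1
    rcases h2 with h2 | h2 | ⟨rfl, hb1, hb2⟩ | ⟨rfl, j, hj1, hji, hJ⟩
    · have := I1.supp _ _ h2; omega
    · obtain ⟨a', b', hr, ha, hbb⟩ := h1
      obtain ⟨b'', a'', hr', hb', ha'⟩ := h2
      have e1 : b' = b'' := by omega
      have e2 : a'' = a' := by omega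
      subst e1; subst e2
      have := I2.antisymm _ _ hr hr'
      omega
    · omega
    · have := J2_bounds hJ; omega
  · -- b = I1.n+1, so h2 : Prel (I1.n+1) a
    have := Prel_from_m (Or.inr h2); omega
  · have := Prel_from_m (Or.inr h2); omega

lemma Prel_incCond (I1 I2 : IntervalPoset) (x : ℕ → ℕ) (i : ℕ) :
    ∀ a b c, Prel I1 I2 x i a c → a < b → b < c → Prel I1 I2 x i b c := by
  intro a b c h hab hbc
  rcases h with ⟨rfl, h⟩ | h | h | ⟨rfl, ha1, ha2⟩ | ⟨rfl, j, hj1, hji, hJ⟩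
  · omega
  · have := I1.supp _ _ h
    exact Or.inr (Or.inl (I1.incCond _ _ _ h hab hbc))
  · obtain ⟨a', c', hr, rfl, rfl⟩ := h
    have hs := I2.supp _ _ hr
    obtain ⟨b0, rfl⟩ : ∃ b0, b = b0 + I1.n + 1 := ⟨b - I1.n - 1, by omega⟩
    exact Or.inr (Or.inr (Or.inl ⟨b0, c', I2.incCond _ _ _ hr (by omega) (by omega), rfl, rfl⟩))
  · exact Or.inr (Or.inr (Or.inr (Or.inl ⟨rfl, by omega, by omega⟩)))
  · have := J2_bounds hJ; omega

lemma Prel_decCond (I1 I2 : IntervalPoset) (t : ℕ) (x : ℕ → ℕ)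
    (hmono : ∀ i j, 1 ≤ i → i < j → j ≤ t → x i < x j)
    (hx : ∀ r, compMin I2 r → ∃ j, 1 ≤ j ∧ j ≤ t ∧ x j = r + I1.n + 1)
    (hx' : ∀ j, 1 ≤ j → j ≤ t → ∃ r, compMin I2 r ∧ x j = r + I1.n + 1)
    (i : ℕ) (hit : i ≤ t) :
    ∀ a b c, Prel I1 I2 x i c a → a < b → b < c → Prel I1 I2 x i b a := by
  intro a b c h hab hbc
  rcases h with ⟨rfl, h⟩ | h | h | ⟨rfl, ha1, ha2⟩ | ⟨rfl, j, hj1, hji, hJ⟩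
  · omega
  · have := I1.supp _ _ h
    exact Or.inr (Or.inl (I1.decCond _ _ _ h hab hbc))
  · obtain ⟨c', a', hr, rfl, rfl⟩ := h
    have hs := I2.supp _ _ hr
    obtain ⟨b0, rfl⟩ : ∃ b0, b = b0 + I1.n + 1 := ⟨b - I1.n - 1, by omega⟩
    exact Or.inr (Or.inr (Or.inl ⟨b0, a', I2.decCond _ _ _ hr (by omega) (by omega), rfl, rfl⟩))
  · -- a = I1.n+1, c ≤ I1.n : impossible since a < c
    omega
  · -- a = I1.n+1, decreasing case
    obtain ⟨j', hj'1, hj'i, hJ'⟩ := key_dec I1 I2 t x hmono hx hx' hit hj1 hji hJ hab hbc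
    exact Or.inr (Or.inr (Or.inr (Or.inr ⟨rfl, j', hj'1, hj'i, hJ'⟩)))

def mkP (I1 I2 : IntervalPoset) (t : ℕ) (x : ℕ → ℕ)
    (hmono : ∀ i j, 1 ≤ i → i < j → j ≤ t → x i < x j)
    (hx : ∀ r, compMin I2 r → ∃ j, 1 ≤ j ∧ j ≤ t ∧ x j = r + I1.n + 1)
    (hx' : ∀ j, 1 ≤ j → j ≤ t → ∃ r, compMin I2 r ∧ x j = r + I1.n + 1)
    (i : ℕ) (hit : i ≤ t) : IntervalPoset where
  n := I1.n + I2.n + 1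
  rel := Prel I1 I2 x i
  supp := Prel_supp I1 I2 x i
  refl := Prel_refl I1 I2 x i
  antisymm := Prel_antisymm I1 I2 x i
  trans := Prel_trans I1 I2 x i
  incCond := Prel_incCond I1 I2 x i
  decCond := Prel_decCond I1 I2 t x hmono hx hx' i hit

lemma Prel_eq_genClos (I1 I2 : IntervalPoset) (t : ℕ) (x : ℕ → ℕ)
    (hx' : ∀ j, 1 ≤ j → j ≤ t → ∃ r, compMin I2 r ∧ x j = r + I1.n + 1)
    (i : ℕ) (hit : i ≤ t) :
    Prel I1 I2 x i = genClos (I1.n + I2.n + 1)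
      (fun u v =>
        I1.rel u v ∨
        (∃ a b, I2.rel a b ∧ u = a + I1.n + 1 ∧ v = b + I1.n + 1) ∨
        (v = I1.n + 1 ∧ 1 ≤ u ∧ u ≤ I1.n) ∨
        (v = I1.n + 1 ∧ ∃ j, 1 ≤ j ∧ j ≤ i ∧ u = x j)) := by
  have step_sub : ∀ u v,
      (I1.rel u v ∨
        (∃ a b, I2.rel a b ∧ u = a + I1.n + 1 ∧ v = b + I1.n + 1) ∨
        (v = I1.n + 1 ∧ 1 ≤ u ∧ u ≤ I1.n) ∨
        (v = I1.n + 1 ∧ ∃ j, 1 ≤ j ∧ j ≤ i ∧ u = x j)) → Prel I1 I2 x i u v := by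
    intro u v h
    rcases h with h | h | h | ⟨rfl, j, hj1, hji, rfl⟩
    · exact Or.inr (Or.inl h)
    · exact Or.inr (Or.inr (Or.inl h))
    · exact Or.inr (Or.inr (Or.inr (Or.inl h)))
    · obtain ⟨r, hcm, hxj⟩ := hx' j hj1 (le_trans hji hit)
      exact Or.inr (Or.inr (Or.inr (Or.inr ⟨rfl, j, hj1, hji,
        ⟨r, r, I2.refl r hcm.1 hcm.2.1, hxj, hxj⟩⟩)))
  funext a b
  apply propext
  constructor
  · intro h
    rcases h with ⟨rfl, h1, h2⟩ | h | h | ⟨rfl, h1, h2⟩ | ⟨rfl, j, hj1, hji, hJ⟩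
    · exact Or.inl ⟨rfl, h1, h2⟩
    · exact Or.inr (Relation.TransGen.single (Or.inl h))
    · exact Or.inr (Relation.TransGen.single (Or.inr (Or.inl h)))
    · exact Or.inr (Relation.TransGen.single (Or.inr (Or.inr (Or.inl ⟨rfl, h1, h2⟩))))
    · have s1 : Relation.TransGen (fun u v =>
          I1.rel u v ∨
          (∃ a b, I2.rel a b ∧ u = a + I1.n + 1 ∧ v = b + I1.n + 1) ∨
          (v = I1.n + 1 ∧ 1 ≤ u ∧ u ≤ I1.n) ∨
          (v = I1.n + 1 ∧ ∃ j, 1 ≤ j ∧ j ≤ i ∧ u = x j)) a (x j) :=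
        Relation.TransGen.single (Or.inr (Or.inl hJ))
      exact Or.inr (s1.tail (Or.inr (Or.inr (Or.inr ⟨rfl, j, hj1, hji, rfl⟩))))
  · intro h
    rcases h with ⟨rfl, h1, h2⟩ | h
    · exact Or.inl ⟨rfl, h1, h2⟩
    · induction h with
      | single h => exact step_sub _ _ h
      | tail _ h ih => exact Prel_trans I1 I2 x i _ _ _ ih (step_sub _ _ h)

lemma mkP_mem (I1 I2 : IntervalPoset) (t : ℕ) (x : ℕ → ℕ)
    (hmono : ∀ i j, 1 ≤ i → i < j → j ≤ t → x i < x j)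
    (hx : ∀ r, compMin I2 r → ∃ j, 1 ≤ j ∧ j ≤ t ∧ x j = r + I1.n + 1)
    (hx' : ∀ j, 1 ≤ j → j ≤ t → ∃ r, compMin I2 r ∧ x j = r + I1.n + 1)
    (i : ℕ) (hit : i ≤ t) :
    mkP I1 I2 t x hmono hx hx' i hit ∈ comp I1 I2 := by
  refine ⟨rfl, ?_, ?_, ?_, ?_⟩
  · intro a b ha1 ha2 hb1 hb2
    constructor
    · intro h
      rcases h with ⟨rfl, h1, h2⟩ | h | h | ⟨rfl, h1, h2⟩ | ⟨rfl, j, hj1, hji, hJ⟩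
      · exact I1.refl a ha1 ha2
      · exact h
      · have := J2_bounds h; omega
      · omega
      · omega
    · intro h
      exact Or.inr (Or.inl h)
  · intro a b ha1 ha2 hb1 hb2
    constructor
    · intro h
      rcases h with ⟨heq, h1, h2⟩ | h | h | ⟨heq, h1, h2⟩ | ⟨heq, j, hj1, hji, hJ⟩
      · have : a = b := by omega
        subst this; exact I2.refl a ha1 ha2
      · have := I1.supp _ _ h; omega
      · obtain ⟨a', b', hr, e1, e2⟩ := h
        have e3 : a' = a := by omega
        have e4 : b' = b := by omega
        rw [e3, e4] at hr; exact hr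
      · omega
      · omega
    · intro h
      exact Or.inr (Or.inr (Or.inl ⟨a, b, h, rfl, rfl⟩))
  · intro k h1 h2
    exact Or.inr (Or.inr (Or.inr (Or.inl ⟨rfl, h1, h2⟩)))
  · intro j hj hrel
    have := Prel_from_m hrel
    omega

lemma hx'_of (I1 I2 : IntervalPoset) (t : ℕ) (x : ℕ → ℕ) (ht : t = trees I2)
    (hx : ∀ r, compMin I2 r ↔ ∃ j, 1 ≤ j ∧ j ≤ t ∧ x j = r + I1.n + 1) :
    ∀ j, 1 ≤ j → j ≤ t → ∃ r, compMin I2 r ∧ x j = r + I1.n + 1 := by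
  classical
  intro j0 hj01 hj0t
  by_contra hcon
  push_neg at hcon
  set C : Set ℕ := {r | compMin I2 r} with hC
  have hCfin : C.Finite := Set.Finite.subset (Set.finite_Icc 1 I2.n)
    (fun r hr => ⟨hr.1, hr.2.1⟩)
  have hf : ∀ r, r ∈ C → ∃ j, 1 ≤ j ∧ j ≤ t ∧ x j = r + I1.n + 1 := fun r hr => (hx r).mp hr
  choose f hf1 hf2 hf3 using hf
  set g : ℕ → ℕ := fun r => if h : r ∈ C then f r h else 0 with hg
  have hmaps : ∀ r ∈ C, g r ∈ Set.Icc 1 t \ {j0} := by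
    intro r hr
    have : g r = f r hr := dif_pos hr
    rw [this]
    refine ⟨⟨hf1 r hr, hf2 r hr⟩, ?_⟩
    intro hmem
    simp only [Set.mem_singleton_iff] at hmem
    exact hcon r hr (hmem ▸ (hf3 r hr))
  have hinj : Set.InjOn g C := by
    intro r1 h1 r2 h2 he
    have e1 : g r1 = f r1 h1 := dif_pos h1
    have e2 : g r2 = f r2 h2 := dif_pos h2
    rw [e1, e2] at he
    have k1 := hf3 r1 h1
    rw [he, hf3 r2 h2] at k1
    omega
  have hle : C.ncard ≤ (Set.Icc 1 t \ {j0}).ncard :=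
    Set.ncard_le_ncard_of_injOn g hmaps hinj
      ((Set.finite_Icc 1 t).subset Set.diff_subset)
  have hlt : (Set.Icc 1 t \ {j0}).ncard < (Set.Icc 1 t).ncard :=
    Set.ncard_diff_singleton_lt_of_mem ⟨hj01, hj0t⟩ (Set.finite_Icc 1 t)
  have hIcc : (Set.Icc 1 t).ncard = t := by
    rw [← Finset.coe_Icc, Set.ncard_coe_finset, Nat.card_Icc]
    omega
  have : t = C.ncard := ht
  omega

lemma comp_cross' (I1 I2 : IntervalPoset) {Q : IntervalPoset} (hQ : Q ∈ comp I1 I2)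
    {a b : ℕ} (ha1 : 1 ≤ a) (ha2 : a ≤ I1.n) (hb1 : I1.n + 2 ≤ b)
    (hb2 : b ≤ I1.n + I2.n + 1) : ¬ Q.rel a b ∧ ¬ Q.rel b a := by
  obtain ⟨hn, h1, h2, h3, h4⟩ := hQ
  constructor
  · intro h
    have : Q.rel (I1.n + 1) b := Q.incCond a (I1.n + 1) b h (by omega) (by omega)
    exact h4 b (by omega) this
  · intro h
    have hma : Q.rel (I1.n + 1) a := Q.decCond a (I1.n + 1) b h (by omega) (by omega)
    have := Q.antisymm _ _ (h3 a ha1 ha2) hma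
    omega

lemma comp_sub (I1 I2 : IntervalPoset) (t : ℕ) (x : ℕ → ℕ)
    (hmono : ∀ i j, 1 ≤ i → i < j → j ≤ t → x i < x j)
    (hx : ∀ r, compMin I2 r ↔ ∃ j, 1 ≤ j ∧ j ≤ t ∧ x j = r + I1.n + 1)
    (hx' : ∀ j, 1 ≤ j → j ≤ t → ∃ r, compMin I2 r ∧ x j = r + I1.n + 1)
    {Q : IntervalPoset} (hQ : Q ∈ comp I1 I2) :
    ∃ i, i ≤ t ∧ Q.rel = Prel I1 I2 x i := by
  classical
  obtain ⟨hn, h1, h2, h3, h4⟩ := hQ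
  set SQ : Set ℕ := {j | 1 ≤ j ∧ j ≤ t ∧ Q.rel (x j) (I1.n + 1)} with hSQ
  have hbdd : BddAbove SQ := ⟨t, fun j hj => hj.2.1⟩
  set i := sSup SQ with hi
  have hxup : ∀ j, 1 ≤ j → j ≤ t → I1.n + 2 ≤ x j ∧ x j ≤ I1.n + I2.n + 1 := by
    intro j hj1 hjt
    obtain ⟨r, hcm, hxj⟩ := hx' j hj1 hjt
    have := hcm.1; have := hcm.2.1; omega
  have hmem : ∀ j, j ∈ SQ ↔ (1 ≤ j ∧ j ≤ i) := by
    intro j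
    constructor
    · intro hj; exact ⟨hj.1, le_csSup hbdd hj⟩
    · rintro ⟨hj1, hji⟩
      rcases Set.eq_empty_or_nonempty SQ with he | hne
      · rw [he] at hi
        simp [Set.eq_empty_iff_forall_notMem] at hi
        omega
      · have hiS : i ∈ SQ := Nat.sSup_mem hne hbdd
        rcases eq_or_lt_of_le hji with h | h
        · rwa [h]
        · obtain ⟨hi1, hit, hrel⟩ := hiS
          have hlt : x j < x i := hmono j i hj1 h hit
          have hb := hxup j hj1 (by omega)
          exact ⟨hj1, by omega,
            Q.decCond (I1.n + 1) (x j) (x i) hrel (by omega) hlt⟩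
  have hit : i ≤ t := by
    rcases Set.eq_empty_or_nonempty SQ with he | hne
    · rw [hi, he, csSup_empty]; exact bot_le
    · exact (Nat.sSup_mem hne hbdd).2.1
  refine ⟨i, hit, ?_⟩
  funext a b
  apply propext
  constructor
  · intro h
    have hb := Q.supp a b h
    rw [hn] at hb
    rcases Nat.lt_trichotomy a (I1.n + 1) with ha | ha | ha <;>
      rcases Nat.lt_trichotomy b (I1.n + 1) with hbb | hbb | hbb
    · exact Or.inr (Or.inl ((h1 a b (by omega) (by omega) (by omega) (by omega)).mp h))
    · exact Or.inr (Or.inr (Or.inr (Or.inl ⟨hbb, by omega, by omega⟩)))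
    · exact absurd h ((comp_cross' I1 I2 ⟨hn, h1, h2, h3, h4⟩ (by omega) (by omega)
        (by omega) (by omega)).1)
    · -- a = I1.n+1, b < : impossible
      subst ha
      have := Q.antisymm _ _ h (h3 b hb.2.2.1 (by omega))
      omega
    · exact Or.inl ⟨by omega, by omega, by omega⟩
    · rw [ha] at h
      exact absurd h (h4 b hbb)
    · exact absurd h ((comp_cross' I1 I2 ⟨hn, h1, h2, h3, h4⟩ (by omega) (by omega)
        (by omega) (by omega)).2)
    · -- a > I1.n+1, b = I1.n+1 : component argument
      obtain ⟨a0, rfl⟩ : ∃ a0, a = a0 + I1.n + 1 := ⟨a - I1.n - 1, by omega⟩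
      obtain ⟨r, hcm, hrel, hra⟩ := comp_exists I2 (y := a0) (by omega) (by omega)
      obtain ⟨j, hj1, hjt, hxj⟩ := (hx r).mp hcm
      have hb2 : Q.rel (x j) (I1.n + 1) := by
        rcases eq_or_lt_of_le hra with he | hlt
        · rw [hxj]; rw [he]; rw [← hbb]; exact h
        · have : x j < a0 + I1.n + 1 := by omega
          have hxlow : I1.n + 1 < x j := by have := hcm.1; omega
          exact Q.decCond (I1.n + 1) (x j) (a0 + I1.n + 1) (hbb ▸ h) hxlow this
      have hjS : j ∈ SQ := ⟨hj1, hjt, hb2⟩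
      have hji : j ≤ i := ((hmem j).mp hjS).2
      exact Or.inr (Or.inr (Or.inr (Or.inr ⟨hbb, j, hj1, hji, ⟨a0, r, hrel, rfl, hxj⟩⟩)))
    · -- both right
      obtain ⟨a0, rfl⟩ : ∃ a0, a = a0 + I1.n + 1 := ⟨a - I1.n - 1, by omega⟩
      obtain ⟨b0, rfl⟩ : ∃ b0, b = b0 + I1.n + 1 := ⟨b - I1.n - 1, by omega⟩
      exact Or.inr (Or.inr (Or.inl ⟨a0, b0,
        (h2 a0 b0 (by omega) (by omega) (by omega) (by omega)).mp h, rfl, rfl⟩))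
  · intro h
    rcases h with ⟨rfl, hb1, hb2⟩ | h | h | ⟨rfl, hb1, hb2⟩ | ⟨rfl, j, hj1, hji, hJ⟩
    · exact Q.refl a hb1 (by omega)
    · have := I1.supp _ _ h
      exact (h1 a b this.1 this.2.1 this.2.2.1 this.2.2.2).mpr h
    · obtain ⟨a', b', hr, rfl, rfl⟩ := h
      have := I2.supp _ _ hr
      exact (h2 a' b' this.1 this.2.1 this.2.2.1 this.2.2.2).mpr hr
    · exact h3 a hb1 hb2
    · obtain ⟨a', r0, hr, rfl, hxj⟩ := hJ
      have hjS : j ∈ SQ := (hmem j).mpr ⟨hj1, hji⟩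
      have hs := I2.supp _ _ hr
      have q1 : Q.rel (a' + I1.n + 1) (x j) := by
        rw [hxj]
        exact (h2 a' r0 hs.1 hs.2.1 hs.2.2.1 hs.2.2.2).mpr hr
      exact Q.trans _ _ _ q1 hjS.2.2

lemma Prel_ne (I1 I2 : IntervalPoset) (t : ℕ) (x : ℕ → ℕ)
    (hmono : ∀ i j, 1 ≤ i → i < j → j ≤ t → x i < x j)
    (hx' : ∀ j, 1 ≤ j → j ≤ t → ∃ r, compMin I2 r ∧ x j = r + I1.n + 1)
    {i j : ℕ} (hij : i < j) (hjt : j ≤ t) :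
    Prel I1 I2 x i ≠ Prel I1 I2 x j := by
  intro hEq
  have hj1 : 1 ≤ j := by omega
  obtain ⟨r, hcm, hxj⟩ := hx' j hj1 hjt
  have h5 : Prel I1 I2 x j (x j) (I1.n + 1) :=
    Or.inr (Or.inr (Or.inr (Or.inr ⟨rfl, j, hj1, le_refl j,
      ⟨r, r, I2.refl r hcm.1 hcm.2.1, hxj, hxj⟩⟩)))
  rw [← hEq] at h5
  have hrlow := hcm.1
  rcases h5 with ⟨he, _⟩ | h5 | h5 | ⟨_, _, hle⟩ | ⟨_, j', hj'1, hj'i, hJ⟩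
  · omega
  · have := I1.supp _ _ h5; omega
  · have := J2_bounds h5; omega
  · omega
  · obtain ⟨a', b', hr, e1, e2⟩ := hJ
    obtain ⟨r'', hcm'', hxj'⟩ := hx' j' hj'1 (by omega)
    have ea : a' = r := by omega
    have eb : b' = r'' := by omega
    rw [ea, eb] at hr
    have hler : r ≤ r'' :=
      compMin_le I2 hcm (I2.refl r hcm.1 hcm.2.1) (le_refl r) hcm'' hr
    have := hmono j' j hj'1 (by omega) hjt
    omega

/-- Explicit description of the composition `𝔹(I1,I2)`: it consists of exactly
`t+1` interval-posets `P_0, …, P_t` (`t = trees I2`, `x 1 < ⋯ < x t` the least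
labels of the components of `dec I2` shifted by `k1+1`), where `P i` is
generated by the relations of `I1`, the shifted relations of `I2`, the
increasing relations `j ⊴ k1+1` for `j ≤ k1`, and the decreasing relations
`x j ⊴ k1+1` for `j ≤ i`; moreover no element of `𝔹(I1,I2)` has a relation
between `{1,…,k1}` and `{k1+2,…,k1+k2+1}`. -/
theorem stmt6 (I1 I2 : IntervalPoset) (t : ℕ) (ht : t = trees I2) (x : ℕ → ℕ)
    (hmono : ∀ i j, 1 ≤ i → i < j → j ≤ t → x i < x j)
    (hx : ∀ r, compMin I2 r ↔ ∃ j, 1 ≤ j ∧ j ≤ t ∧ x j = r + I1.n + 1) :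
    ∃ P : ℕ → IntervalPoset,
      (∀ i, i ≤ t → (P i).rel = genClos (I1.n + I2.n + 1)
        (fun u v =>
          I1.rel u v ∨
          (∃ a b, I2.rel a b ∧ u = a + I1.n + 1 ∧ v = b + I1.n + 1) ∨
          (v = I1.n + 1 ∧ 1 ≤ u ∧ u ≤ I1.n) ∨
          (v = I1.n + 1 ∧ ∃ j, 1 ≤ j ∧ j ≤ i ∧ u = x j))) ∧
      (comp I1 I2 = {Q | ∃ i, i ≤ t ∧ Q = P i}) ∧
      (∀ i j, i ≤ t → j ≤ t → P i = P j → i = j) ∧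
      (∀ Q ∈ comp I1 I2, ∀ a b, 1 ≤ a → a ≤ I1.n → I1.n + 2 ≤ b →
        b ≤ I1.n + I2.n + 1 → ¬ Q.rel a b ∧ ¬ Q.rel b a) := by
  have hx1 : ∀ r, compMin I2 r → ∃ j, 1 ≤ j ∧ j ≤ t ∧ x j = r + I1.n + 1 :=
    fun r hr => (hx r).mp hr
  have hx' := hx'_of I1 I2 t x ht hx
  refine ⟨fun i => mkP I1 I2 t x hmono hx1 hx' (min i t) (min_le_right i t),
    ?_, ?_, ?_, ?_⟩
  · intro i hit
    show Prel I1 I2 x (min i t) = _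
    rw [min_eq_left hit]
    exact Prel_eq_genClos I1 I2 t x hx' i hit
  · ext Q
    simp only [Set.mem_setOf_eq]
    constructor
    · intro hQ
      obtain ⟨i, hit, hrel⟩ := comp_sub I1 I2 t x hmono hx hx' hQ
      refine ⟨i, hit, ?_⟩
      apply IntervalPoset.ext'
      · exact hQ.1
      · show Q.rel = Prel I1 I2 x (min i t)
        rw [min_eq_left hit]; exact hrel
    · rintro ⟨i, hit, rfl⟩
      exact mkP_mem I1 I2 t x hmono hx1 hx' (min i t) (min_le_right i t)
  · intro i j hi hj hP
    have hrel : Prel I1 I2 x (min i t) = Prel I1 I2 x (min j t) :=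
      congrArg IntervalPoset.rel hP
    rw [min_eq_left hi, min_eq_left hj] at hrel
    rcases Nat.lt_trichotomy i j with h | h | h
    · exact absurd hrel (Prel_ne I1 I2 t x hmono hx' h hj)
    · exact h
    · exact absurd hrel.symm (Prel_ne I1 I2 t x hmono hx' h hi)
  · intro Q hQ a b ha1 ha2 hb1 hb2
    exact comp_cross' I1 I2 hQ ha1 ha2 hb1 hb2
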